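/- Let H be an infinite dimensional complex Hilbert space and let f ∈ ℂ⟨X̄⟩ be a nonconstant noncommutative polynomial. Then the linear span of all values f(a_1,...,a_n) with a_i ∈ B(H) equals B(H). -/

import Mathlib

noncomputable section

open scoped ENNReal

attribute [local instance] Classical.propDecidable

abbrev L2 (γ : Type*) := lp (fun _ : γ => ℂ) 2

namespace Stmt4

variable {γ δ ε ζ : Type*}

lemma qpos : (0:ℝ) < (2 : ℝ≥0∞).toReal := by norm_num

/-- push forward a function along an injection, extending by zero. -/
def pushFun (j : γ → δ) (f : γ → ℂ) : δ → ℂ :=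
  fun b => if h : ∃ a, j a = b then f h.choose else 0

lemma pushFun_apply (j : γ → δ) (hj : Function.Injective j) (f : γ → ℂ) (a : γ) :
    pushFun j f (j a) = f a := by
  have h : ∃ a', j a' = j a := ⟨a, rfl⟩
  simp only [pushFun, dif_pos h]
  exact congrArg f (hj h.choose_spec)

lemma pushFun_apply_not (j : γ → δ) (f : γ → ℂ) {b : δ} (hb : b ∉ Set.range j) :
    pushFun j f b = 0 := by
  have h : ¬ ∃ a, j a = b := by simpa [Set.mem_range] using hb
  simp [pushFun, h]

lemma pushFun_hasSum (j : γ → δ) (hj : Function.Injective j) (f : L2 γ) :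
    HasSum (fun b => ‖pushFun j (⇑f) b‖ ^ (2 : ℝ≥0∞).toReal)
      (‖f‖ ^ (2 : ℝ≥0∞).toReal) := by
  rw [← hj.hasSum_iff (f := fun b => ‖pushFun j (⇑f) b‖ ^ (2 : ℝ≥0∞).toReal)]
  · have : (fun b => ‖pushFun j (⇑f) b‖ ^ (2 : ℝ≥0∞).toReal) ∘ j
        = fun a => ‖f a‖ ^ (2 : ℝ≥0∞).toReal := by
      funext a; simp [pushFun_apply j hj]
    rw [this]
    exact lp.hasSum_norm qpos f
  · intro b hb
    simp [pushFun_apply_not j (⇑f) hb, Real.zero_rpow (ne_of_gt qpos)]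

lemma pushFun_memℓp (j : γ → δ) (hj : Function.Injective j) (f : L2 γ) :
    Memℓp (pushFun j (⇑f)) 2 :=
  memℓp_gen (pushFun_hasSum j hj f).summable

/-- The pushforward operator as a linear isometry. -/
def pushLI (j : γ → δ) (hj : Function.Injective j) : L2 γ →ₗᵢ[ℂ] L2 δ where
  toFun f := ⟨pushFun j (⇑f), pushFun_memℓp j hj f⟩
  map_add' f g := by
    ext b
    simp only [lp.coeFn_add, Pi.add_apply]
    by_cases h : ∃ a, j a = b
    · obtain ⟨a, rfl⟩ := h
      rw [pushFun_apply j hj, pushFun_apply j hj, pushFun_apply j hj]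
      rfl
    · have hb : b ∉ Set.range j := by simpa [Set.mem_range] using h
      rw [pushFun_apply_not _ _ hb, pushFun_apply_not _ _ hb, pushFun_apply_not _ _ hb, add_zero]
  map_smul' c f := by
    ext b
    simp only [lp.coeFn_smul, Pi.smul_apply, RingHom.id_apply]
    by_cases h : ∃ a, j a = b
    · obtain ⟨a, rfl⟩ := h
      rw [pushFun_apply j hj, pushFun_apply j hj]
      rfl
    · have hb : b ∉ Set.range j := by simpa [Set.mem_range] using h
      rw [pushFun_apply_not _ _ hb, pushFun_apply_not _ _ hb, smul_zero]
  norm_map' f := by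
    have h1 := lp.hasSum_norm (E := fun _ : δ => ℂ) qpos
      ⟨pushFun j (⇑f), pushFun_memℓp j hj f⟩
    have h2 := pushFun_hasSum j hj f
    exact Real.rpow_left_injOn (ne_of_gt qpos)
      (Set.mem_setOf.2 (norm_nonneg _)) (Set.mem_setOf.2 (norm_nonneg _)) (h1.unique h2)

def Sop (j : γ → δ) (hj : Function.Injective j) : L2 γ →L[ℂ] L2 δ :=
  (pushLI j hj).toContinuousLinearMap

@[simp] lemma Sop_coord (j : γ → δ) (hj : Function.Injective j) (f : L2 γ) (b : δ) :
    (Sop j hj f) b = pushFun j (⇑f) b := rfl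

/-- pullback -/
lemma pull_memℓp (j : γ → δ) (hj : Function.Injective j) (f : L2 δ) :
    Memℓp (fun a => f (j a)) 2 := by
  apply memℓp_gen
  have : (fun a => ‖f (j a)‖ ^ (2:ℝ≥0∞).toReal)
      = (fun b => ‖f b‖ ^ (2:ℝ≥0∞).toReal) ∘ j := rfl
  rw [this]
  exact (lp.hasSum_norm qpos f).summable.comp_injective hj

def pullLM (j : γ → δ) (hj : Function.Injective j) : L2 δ →ₗ[ℂ] L2 γ where
  toFun f := ⟨fun a => f (j a), pull_memℓp j hj f⟩
  map_add' f g := by ext a; simp [lp.coeFn_add]; rfl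
  map_smul' c f := by ext a; simp [lp.coeFn_smul]

lemma pull_norm_le (j : γ → δ) (hj : Function.Injective j) (f : L2 δ) :
    ‖pullLM j hj f‖ ≤ ‖f‖ := by
  have h1 := lp.hasSum_norm (E := fun _ : γ => ℂ) qpos (pullLM j hj f)
  have h2 := lp.hasSum_norm (E := fun _ : δ => ℂ) qpos f
  have hle : ‖pullLM j hj f‖ ^ (2:ℝ≥0∞).toReal ≤ ‖f‖ ^ (2:ℝ≥0∞).toReal := by
    refine hasSum_le_inj j hj ?_ ?_ h1 h2
    · intro b _; positivity
    · intro a; exact le_of_eq rfl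
  exact (Real.rpow_le_rpow_iff (norm_nonneg _) (norm_nonneg _) qpos).mp hle

def Pop (j : γ → δ) (hj : Function.Injective j) : L2 δ →L[ℂ] L2 γ :=
  LinearMap.mkContinuous (pullLM j hj) 1
    (fun f => by simpa using pull_norm_le j hj f)

@[simp] lemma Pop_coord (j : γ → δ) (hj : Function.Injective j) (f : L2 δ) (a : γ) :
    (Pop j hj f) a = f (j a) := rfl

/-! ### composition identities -/

lemma lp_ext {f g : L2 γ} (h : ∀ b, f b = g b) : f = g := by
  ext b; exact h b

lemma Pop_Sop (j : γ → δ) (hj : Function.Injective j) (f : L2 γ) :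
    Pop j hj (Sop j hj f) = f := by
  apply lp_ext; intro a
  simp [pushFun_apply j hj]

lemma Pop_comp_Sop (j : γ → δ) (hj : Function.Injective j) :
    (Pop j hj).comp (Sop j hj) = ContinuousLinearMap.id ℂ (L2 γ) := by
  ext f : 1
  exact Pop_Sop j hj f

lemma Pop_comp_Sop_disjoint {j : γ → δ} {k : ε → δ}
    (hj : Function.Injective j) (hk : Function.Injective k)
    (hd : ∀ a b, j a ≠ k b) :
    (Pop j hj).comp (Sop k hk) = 0 := by
  ext f : 1
  apply lp_ext; intro a
  have : j a ∉ Set.range k := by rintro ⟨b, hb⟩; exact hd a b hb.symm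
  simp [pushFun_apply_not _ _ this]

lemma Sop_comp_Sop (j : δ → ε) (k : γ → δ)
    (hj : Function.Injective j) (hk : Function.Injective k) :
    (Sop j hj).comp (Sop k hk) = Sop (j ∘ k) (hj.comp hk) := by
  ext f : 1
  apply lp_ext; intro b
  by_cases h : ∃ a, j (k a) = b
  · obtain ⟨a, rfl⟩ := h
    show pushFun j (⇑(Sop k hk f)) (j (k a)) = pushFun (j ∘ k) (⇑f) ((j ∘ k) a)
    rw [pushFun_apply j hj, pushFun_apply (j ∘ k) (hj.comp hk)]
    exact pushFun_apply k hk (⇑f) a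
  · have hb1 : b ∉ Set.range (j ∘ k) := by
      rintro ⟨a, rfl⟩; exact h ⟨a, rfl⟩
    show pushFun j (⇑(Sop k hk f)) b = pushFun (j ∘ k) (⇑f) b
    rw [pushFun_apply_not _ _ hb1]
    by_cases h2 : ∃ c, j c = b
    · obtain ⟨c, rfl⟩ := h2
      rw [pushFun_apply j hj]
      have hc : c ∉ Set.range k := by
        rintro ⟨a, rfl⟩; exact h ⟨a, rfl⟩
      exact pushFun_apply_not _ _ hc
    · exact pushFun_apply_not _ _ (by simpa [Set.mem_range] using h2)

lemma Pop_comp_Pop (j : δ → ε) (k : γ → δ)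
    (hj : Function.Injective j) (hk : Function.Injective k) :
    (Pop k hk).comp (Pop j hj) = Pop (j ∘ k) (hj.comp hk) := by
  ext f : 1
  apply lp_ext; intro a
  rfl

lemma Sop_comp_Pop_surj (j : γ → δ) (hj : Function.Injective j)
    (hs : Function.Surjective j) :
    (Sop j hj).comp (Pop j hj) = ContinuousLinearMap.id ℂ (L2 δ) := by
  ext f : 1
  apply lp_ext; intro b
  obtain ⟨a, rfl⟩ := hs b
  show pushFun j (fun a' => f (j a')) (j a) = f (j a)
  rw [pushFun_apply j hj]

lemma Sop_Pop_apply_mem (j : γ → δ) (hj : Function.Injective j) (f : L2 δ) (a : γ) :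
    (Sop j hj (Pop j hj f)) (j a) = f (j a) := by
  show pushFun j (fun a' => f (j a')) (j a) = f (j a)
  rw [pushFun_apply j hj]

lemma Sop_Pop_apply_not (j : γ → δ) (hj : Function.Injective j) (f : L2 δ) {b : δ}
    (hb : b ∉ Set.range j) : (Sop j hj (Pop j hj f)) b = 0 :=
  pushFun_apply_not _ _ hb

/-- completeness relation for a two-part splitting -/
lemma Sop_Pop_add_Sop_Pop {j₁ : γ → δ} {j₂ : ε → δ}
    (h₁ : Function.Injective j₁) (h₂ : Function.Injective j₂)
    (hd : ∀ a b, j₁ a ≠ j₂ b)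
    (hc : ∀ b, (∃ a, j₁ a = b) ∨ (∃ a, j₂ a = b)) :
    (Sop j₁ h₁).comp (Pop j₁ h₁) + (Sop j₂ h₂).comp (Pop j₂ h₂)
      = ContinuousLinearMap.id ℂ (L2 δ) := by
  ext f : 1
  apply lp_ext; intro b
  have hco : ∀ (g h : L2 δ), (g + h) b = g b + h b := fun g h => rfl
  show (Sop j₁ h₁ (Pop j₁ h₁ f) + Sop j₂ h₂ (Pop j₂ h₂ f)) b = f b
  rw [hco]
  rcases hc b with ⟨a, rfl⟩ | ⟨a, rfl⟩
  · rw [Sop_Pop_apply_mem, Sop_Pop_apply_not j₂ h₂ f (by rintro ⟨c, hc2⟩; exact hd a c hc2.symm), add_zero]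
  · rw [Sop_Pop_apply_mem, Sop_Pop_apply_not j₁ h₁ f (by rintro ⟨c, hc2⟩; exact hd c a hc2), zero_add]

/-! ### Amplification -/

section Amp

variable {ν α : Type*}

def sliceInj (n : ν) : Function.Injective (fun a : α => (n, a)) :=
  fun _ _ h => (Prod.ext_iff.mp h).2

def slice (n : ν) : L2 (ν × α) →L[ℂ] L2 α := Pop (fun a : α => (n, a)) (sliceInj n)

@[simp] lemma slice_coord (n : ν) (f : L2 (ν × α)) (a : α) : (slice n f) a = f (n, a) := rfl

lemma slice_hasSum (f : L2 (ν × α)) :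
    HasSum (fun n : ν => ‖slice n f‖ ^ (2:ℝ≥0∞).toReal) (‖f‖ ^ (2:ℝ≥0∞).toReal) := by
  refine HasSum.prod_fiberwise (lp.hasSum_norm qpos f) (fun n => ?_)
  exact lp.hasSum_norm qpos (slice n f)

variable (c : L2 α →L[ℂ] L2 α)

def ampFun (f : L2 (ν × α)) : ν × α → ℂ := fun p => (c (slice p.1 f)) p.2

lemma ampFun_summable (f : L2 (ν × α)) :
    Summable (fun p : ν × α => ‖ampFun c f p‖ ^ (2:ℝ≥0∞).toReal) := by
  refine (summable_prod_of_nonneg (fun p => by positivity)).mpr ⟨fun n => ?_, ?_⟩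
  · exact (lp.hasSum_norm qpos (c (slice n f))).summable
  · have heq : ∀ n : ν, ∑' a : α, ‖ampFun c f (n, a)‖ ^ (2:ℝ≥0∞).toReal
        = ‖c (slice n f)‖ ^ (2:ℝ≥0∞).toReal := fun n =>
      (lp.hasSum_norm qpos (c (slice n f))).tsum_eq
    rw [show (fun n : ν => ∑' a : α, ‖ampFun c f (n, a)‖ ^ (2:ℝ≥0∞).toReal)
        = fun n => ‖c (slice n f)‖ ^ (2:ℝ≥0∞).toReal from funext heq]
    apply Summable.of_nonneg_of_le (fun n => by positivity)
      (fun n => ?_) (((slice_hasSum f).summable).mul_left (‖c‖ ^ (2:ℝ≥0∞).toReal))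
    calc ‖c (slice n f)‖ ^ (2:ℝ≥0∞).toReal
        ≤ (‖c‖ * ‖slice n f‖) ^ (2:ℝ≥0∞).toReal := by
          apply Real.rpow_le_rpow (norm_nonneg _) (c.le_opNorm _) (le_of_lt qpos)
      _ = ‖c‖ ^ (2:ℝ≥0∞).toReal * ‖slice n f‖ ^ (2:ℝ≥0∞).toReal :=
          Real.mul_rpow (norm_nonneg _) (norm_nonneg _)

lemma ampFun_memℓp (f : L2 (ν × α)) : Memℓp (ampFun c f) 2 :=
  memℓp_gen (ampFun_summable c f)

def ampLM : L2 (ν × α) →ₗ[ℂ] L2 (ν × α) where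
  toFun f := ⟨ampFun c f, ampFun_memℓp c f⟩
  map_add' f g := by
    ext p
    show ampFun c (f + g) p = ampFun c f p + ampFun c g p
    simp only [ampFun, map_add]
    rfl
  map_smul' r f := by
    ext p
    show ampFun c (r • f) p = r • ampFun c f p
    simp only [ampFun, map_smul]
    rfl

lemma amp_norm_le (f : L2 (ν × α)) : ‖ampLM c f‖ ≤ ‖c‖ * ‖f‖ := by
  have h1 := lp.hasSum_norm (E := fun _ : ν × α => ℂ) qpos (ampLM c f)
  have h2 : HasSum (fun n : ν => ‖c (slice n f)‖ ^ (2:ℝ≥0∞).toReal)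
      (‖ampLM c f‖ ^ (2:ℝ≥0∞).toReal) := by
    refine HasSum.prod_fiberwise h1 (fun n => ?_)
    have : (fun a : α => ‖(ampLM c f) (n, a)‖ ^ (2:ℝ≥0∞).toReal)
        = fun a => ‖(c (slice n f)) a‖ ^ (2:ℝ≥0∞).toReal := rfl
    rw [show (fun a : α => ‖(↑(ampLM c f) : ∀ _, ℂ) (n, a)‖ ^ (2:ℝ≥0∞).toReal)
        = fun a => ‖(c (slice n f)) a‖ ^ (2:ℝ≥0∞).toReal from rfl]
    exact lp.hasSum_norm qpos (c (slice n f))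
  have h3 : ‖ampLM c f‖ ^ (2:ℝ≥0∞).toReal ≤ (‖c‖ * ‖f‖) ^ (2:ℝ≥0∞).toReal := by
    have hb := (slice_hasSum f).mul_left (‖c‖ ^ (2:ℝ≥0∞).toReal)
    have hle := hasSum_le (f := fun n : ν => ‖c (slice n f)‖ ^ (2:ℝ≥0∞).toReal)
      (g := fun n : ν => ‖c‖ ^ (2:ℝ≥0∞).toReal * ‖slice n f‖ ^ (2:ℝ≥0∞).toReal)
      (fun n => by
        calc ‖c (slice n f)‖ ^ (2:ℝ≥0∞).toReal
            ≤ (‖c‖ * ‖slice n f‖) ^ (2:ℝ≥0∞).toReal :=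
              Real.rpow_le_rpow (norm_nonneg _) (c.le_opNorm _) (le_of_lt qpos)
          _ = ‖c‖ ^ (2:ℝ≥0∞).toReal * ‖slice n f‖ ^ (2:ℝ≥0∞).toReal :=
              Real.mul_rpow (norm_nonneg _) (norm_nonneg _)) h2 hb
    calc ‖ampLM c f‖ ^ (2:ℝ≥0∞).toReal
        ≤ ‖c‖ ^ (2:ℝ≥0∞).toReal * (‖f‖ ^ (2:ℝ≥0∞).toReal) := hle
      _ = (‖c‖ * ‖f‖) ^ (2:ℝ≥0∞).toReal := (Real.mul_rpow (norm_nonneg _) (norm_nonneg _)).symm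
  exact (Real.rpow_le_rpow_iff (norm_nonneg _) (by positivity) qpos).mp h3

def Amp : L2 (ν × α) →L[ℂ] L2 (ν × α) :=
  LinearMap.mkContinuous (ampLM c) ‖c‖ (amp_norm_le c)

@[simp] lemma Amp_coord (f : L2 (ν × α)) (p : ν × α) :
    (Amp c f) p = (c (slice p.1 f)) p.2 := rfl

end Amp

/-! ### Halmos: every operator is a sum of two commutators -/

section Halmos

variable {α : Type*}

def succInj : Function.Injective (fun p : ℕ × α => (p.1 + 1, p.2)) := by
  rintro ⟨n, a⟩ ⟨m, b⟩ h
  simp only [Prod.ext_iff] at h ⊢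
  exact ⟨by omega, h.2⟩

lemma corner_commutator (c : L2 α →L[ℂ] L2 α) :
    (Sop (fun a : α => ((0:ℕ), a)) (sliceInj 0)).comp (c.comp (slice (0:ℕ)))
      = (Amp c).comp (Pop _ (succInj (α := α))) * Sop _ (succInj (α := α))
        - Sop _ (succInj (α := α)) * ((Amp c).comp (Pop _ (succInj (α := α)))) := by
  have h1 : (Amp c).comp (Pop _ (succInj (α := α))) * Sop _ (succInj (α := α)) = Amp c := by
    rw [ContinuousLinearMap.mul_def, ContinuousLinearMap.comp_assoc,
      Pop_comp_Sop, ContinuousLinearMap.comp_id]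
  rw [h1]
  have h2 : Sop _ (succInj (α := α)) * ((Amp c).comp (Pop _ (succInj (α := α))))
      = Amp c - (Sop (fun a : α => ((0:ℕ), a)) (sliceInj 0)).comp (c.comp (slice (0:ℕ))) := by
    ext f : 1
    apply lp_ext; intro p
    obtain ⟨n, a⟩ := p
    simp only [ContinuousLinearMap.sub_apply, ContinuousLinearMap.mul_apply,
      ContinuousLinearMap.coe_comp', Function.comp_apply, lp.coeFn_sub, Pi.sub_apply]
    rcases n with _ | m
    · have h0 : ((0:ℕ), a) ∉ Set.range (fun p : ℕ × α => (p.1 + 1, p.2)) := by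
        rintro ⟨⟨m, b⟩, hmb⟩
        simp [Prod.ext_iff] at hmb
      simp only [Sop_coord]
      rw [pushFun_apply_not _ _ h0]
      have h3 : pushFun (fun a : α => ((0:ℕ), a)) (⇑(c (slice (0:ℕ) f))) ((0:ℕ), a)
          = (c (slice (0:ℕ) f)) a := by
        simpa using pushFun_apply (fun a : α => ((0:ℕ), a)) (sliceInj 0)
          (⇑(c (slice (0:ℕ) f))) a
      rw [h3]
      simp only [Amp_coord]
      ring
    · simp only [Sop_coord]
      have h4 : pushFun (fun p : ℕ × α => (p.1 + 1, p.2))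
          (⇑((Amp c) ((Pop _ (succInj (α := α))) f))) (m + 1, a)
          = ((Amp c) ((Pop _ (succInj (α := α))) f)) (m, a) := by
        simpa using pushFun_apply (fun p : ℕ × α => (p.1 + 1, p.2)) (succInj (α := α))
          (⇑((Amp c) ((Pop _ (succInj (α := α))) f))) (m, a)
      rw [h4]
      have hnr : ((m + 1 : ℕ), a) ∉ Set.range (fun a : α => ((0:ℕ), a)) := by
        rintro ⟨b, hb⟩
        simp [Prod.ext_iff] at hb
      rw [pushFun_apply_not _ _ hnr, sub_zero]
      show (c (slice m ((Pop _ (succInj (α := α))) f))) a = (c (slice (m+1) f)) a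
      have : slice m ((Pop _ (succInj (α := α))) f) = slice (m+1) f := by
        apply lp_ext; intro a'
        rfl
      rw [this]
  rw [h2]
  abel

lemma conj_mul {B C : Type*} [NormedAddCommGroup B] [NormedSpace ℂ B]
    [NormedAddCommGroup C] [NormedSpace ℂ C]
    (U : B →L[ℂ] C) (U' : C →L[ℂ] B) (h : U'.comp U = ContinuousLinearMap.id ℂ B)
    (Z Z' : B →L[ℂ] B) :
    (U.comp (Z.comp U')) * (U.comp (Z'.comp U')) = U.comp ((Z * Z').comp U') := by
  rw [ContinuousLinearMap.mul_def, ContinuousLinearMap.mul_def]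
  simp only [ContinuousLinearMap.comp_assoc]
  congr 2
  simp only [← ContinuousLinearMap.comp_assoc, h, ContinuousLinearMap.id_comp]

lemma exists_two_commutators (eN : (ℕ × α) ≃ α) (X : L2 α →L[ℂ] L2 α) :
    ∃ b₁ b₂ b₃ b₄ : L2 α →L[ℂ] L2 α,
      X = (b₁ * b₂ - b₂ * b₁) + (b₃ * b₄ - b₄ * b₃) := by
  set A' := L2 (ℕ × α)
  let U : A' →L[ℂ] L2 α := Sop (⇑eN) eN.injective
  let U' : L2 α →L[ℂ] A' := Pop (⇑eN) eN.injective
  have hU'U : U'.comp U = ContinuousLinearMap.id ℂ A' := Pop_comp_Sop _ _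
  have hUU' : U.comp U' = ContinuousLinearMap.id ℂ (L2 α) := Sop_comp_Pop_surj _ _ eN.surjective
  have hcan : ∀ (Z : A' →L[ℂ] L2 α), U.comp (U'.comp Z) = Z := fun Z => by
    rw [← ContinuousLinearMap.comp_assoc, hUU', ContinuousLinearMap.id_comp]
  let X' : A' →L[ℂ] A' := U'.comp (X.comp U)
  let S0 : L2 α →L[ℂ] A' := Sop (fun a : α => ((0:ℕ), a)) (sliceInj 0)
  let V : A' →L[ℂ] A' := S0.comp U
  let W : A' →L[ℂ] A' := U'.comp ((slice (0:ℕ)).comp (ContinuousLinearMap.id ℂ A'))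
  have hW : W = U'.comp (slice (0:ℕ)) := by
    show U'.comp ((slice (0:ℕ)).comp (ContinuousLinearMap.id ℂ A')) = _
    rw [ContinuousLinearMap.comp_id]
  have hslS : (slice (0:ℕ)).comp S0 = ContinuousLinearMap.id ℂ (L2 α) :=
    Pop_comp_Sop (fun a : α => ((0:ℕ), a)) (sliceInj 0)
  have hWV : W.comp V = ContinuousLinearMap.id ℂ A' := by
    rw [hW]
    show (U'.comp (slice (0:ℕ))).comp (S0.comp U) = _
    rw [ContinuousLinearMap.comp_assoc, ← ContinuousLinearMap.comp_assoc (slice (0:ℕ)) S0 U,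
      hslS, ContinuousLinearMap.id_comp, hU'U]
  have hVXW : V.comp (X'.comp W) = S0.comp (X.comp (slice (0:ℕ))) := by
    rw [hW]
    show (S0.comp U).comp ((U'.comp (X.comp U)).comp (U'.comp (slice (0:ℕ)))) = _
    simp only [ContinuousLinearMap.comp_assoc]
    rw [hcan, hcan]
  -- corner lemma
  obtain ⟨C1, C2, hC⟩ : ∃ C1 C2 : A' →L[ℂ] A',
      S0.comp (X.comp (slice (0:ℕ))) = C1 * C2 - C2 * C1 :=
    ⟨(Amp X).comp (Pop _ (succInj (α := α))), Sop _ (succInj (α := α)), corner_commutator X⟩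
  -- X' = VX'W - [VX', W]
  have hX'eq : X' = V.comp (X'.comp W) - ((V.comp X') * W - W * (V.comp X')) := by
    have h1 : (V.comp X') * W = V.comp (X'.comp W) := by
      rw [ContinuousLinearMap.mul_def, ContinuousLinearMap.comp_assoc]
    have h2 : W * (V.comp X') = X' := by
      rw [ContinuousLinearMap.mul_def, ← ContinuousLinearMap.comp_assoc, hWV,
        ContinuousLinearMap.id_comp]
    rw [h1, h2]
    abel
  -- transport down: X = U ∘ X' ∘ U'
  have hXX' : X = U.comp (X'.comp U') := by
    show X = U.comp ((U'.comp (X.comp U)).comp U')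
    simp only [ContinuousLinearMap.comp_assoc]
    rw [hUU', ContinuousLinearMap.comp_id, ← ContinuousLinearMap.comp_assoc U U' X,
      hUU', ContinuousLinearMap.id_comp]
  refine ⟨U.comp (C1.comp U'), U.comp (C2.comp U'),
      U.comp (W.comp U'), U.comp ((V.comp X').comp U'), ?_⟩
  rw [conj_mul U U' hU'U, conj_mul U U' hU'U, conj_mul U U' hU'U, conj_mul U U' hU'U]
  have hinner : C1 * C2 - C2 * C1 + (W * (V.comp X') - (V.comp X') * W) = X' := by
    rw [← hC, ← hVXW]
    conv_rhs => rw [hX'eq]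
    abel
  have hfold : U.comp ((C1 * C2).comp U') - U.comp ((C2 * C1).comp U') +
      (U.comp ((W * (V.comp X')).comp U') - U.comp (((V.comp X') * W).comp U'))
      = U.comp ((C1 * C2 - C2 * C1 + (W * (V.comp X') - (V.comp X') * W)).comp U') := by
    simp only [ContinuousLinearMap.comp_sub, ContinuousLinearMap.sub_comp,
      ContinuousLinearMap.comp_add, ContinuousLinearMap.add_comp]
  rw [hfold, hinner]
  exact hXX'

end Halmos

/-! ### Free algebra evaluation machinery -/

section FreeAlg

variable {B : Type*} [Ring B] [Algebra ℂ B]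

abbrev Emo : FreeAlgebra ℂ ℕ ≃ₐ[ℂ] MonoidAlgebra ℂ (FreeMonoid ℕ) :=
  FreeAlgebra.equivMonoidAlgebraFreeMonoid (R := ℂ) (X := ℕ)

lemma Emo_ι (i : ℕ) : Emo (FreeAlgebra.ι ℂ i) = MonoidAlgebra.single (FreeMonoid.of i) 1 := by
  simp [Emo, FreeAlgebra.equivMonoidAlgebraFreeMonoid, FreeAlgebra.lift_ι_apply,
    MonoidAlgebra.of_apply]

lemma lift_eq_sum (a : ℕ → B) (g : FreeAlgebra ℂ ℕ) :
    FreeAlgebra.lift ℂ a g = (Emo g).coeff.sum fun u c => c • (FreeMonoid.lift a u) := by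
  have key : ((MonoidAlgebra.lift ℂ B (FreeMonoid ℕ)) (FreeMonoid.lift a)).comp Emo.toAlgHom
      = FreeAlgebra.lift ℂ a := by
    apply FreeAlgebra.hom_ext
    funext i
    show (MonoidAlgebra.lift ℂ B (FreeMonoid ℕ)) (FreeMonoid.lift a) (Emo (FreeAlgebra.ι ℂ i))
      = FreeAlgebra.lift ℂ a (FreeAlgebra.ι ℂ i)
    rw [Emo_ι, MonoidAlgebra.lift_single, FreeAlgebra.lift_ι_apply, FreeMonoid.lift_eval_of,
      one_smul]
  calc FreeAlgebra.lift ℂ a g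
      = (MonoidAlgebra.lift ℂ B (FreeMonoid ℕ)) (FreeMonoid.lift a) (Emo g) := by
        rw [← key]; rfl
    _ = _ := MonoidAlgebra.lift_apply _ _

lemma word_conj (v w : B) (hwv : w * v = 1) (a : ℕ → B) :
    ∀ l : List ℕ, l ≠ [] →
      FreeMonoid.lift (fun i => v * a i * w) (FreeMonoid.ofList l)
        = v * FreeMonoid.lift a (FreeMonoid.ofList l) * w := by
  intro l
  induction l with
  | nil => intro h; exact absurd rfl h
  | cons i l ih =>
    intro _
    rcases eq_or_ne l [] with rfl | hl
    · rw [FreeMonoid.ofList_singleton, FreeMonoid.lift_eval_of, FreeMonoid.lift_eval_of]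
    · rw [FreeMonoid.ofList_cons, map_mul, map_mul, ih hl, FreeMonoid.lift_eval_of,
        FreeMonoid.lift_eval_of]
      simp only [mul_assoc]
      rw [← mul_assoc w v, hwv, one_mul]

lemma conj_lift (v w : B) (hwv : w * v = 1) (a : ℕ → B) (g : FreeAlgebra ℂ ℕ)
    (hg1 : (Emo g).coeff 1 = 0) :
    v * (FreeAlgebra.lift ℂ a g) * w = FreeAlgebra.lift ℂ (fun i => v * (a i) * w) g := by
  rw [lift_eq_sum, lift_eq_sum, Finsupp.sum, Finsupp.sum, Finset.mul_sum, Finset.sum_mul]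
  apply Finset.sum_congr rfl
  intro u hu
  have hu1 : u ≠ 1 := by
    rintro rfl
    exact (Finsupp.mem_support_iff.mp hu) hg1
  have : FreeMonoid.lift (fun i => v * a i * w) u = v * FreeMonoid.lift a u * w := by
    have := word_conj v w hwv a (FreeMonoid.toList u) (by
      intro h
      apply hu1
      have : u = FreeMonoid.ofList (FreeMonoid.toList u) := rfl
      rw [this, h, FreeMonoid.ofList_nil])
    simpa [FreeMonoid.ofList_toList] using this
  rw [this, mul_smul_comm, smul_mul_assoc]

end FreeAlg

section Chase

variable {B : Type*} [Ring B] [Algebra ℂ B]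

lemma span_eq_top_abstract (Val : Set B)
    (hconj : ∀ v w : B, w * v = 1 → ∀ m ∈ Val, v * m * w ∈ Val)
    (V₁ W₁ V₂ W₂ : B)
    (r11 : W₁ * V₁ = 1) (r22 : W₂ * V₂ = 1) (r12 : W₁ * V₂ = 0) (r21 : W₂ * V₁ = 0)
    (rcomp : V₁ * W₁ + V₂ * W₂ = 1)
    (t x y : B) (ht : t ∈ Val) (c : ℂ) (hc : c ≠ 0) (hxty : x * t * y = c • (1:B))
    (hcomm : ∀ z : B, ∃ b₁ b₂ b₃ b₄ : B, z = (b₁*b₂ - b₂*b₁) + (b₃*b₄ - b₄*b₃)) :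
    Submodule.span ℂ Val = ⊤ := by
  set M : Submodule ℂ B := Submodule.span ℂ Val with hM
  have hVal : ∀ m ∈ Val, m ∈ M := fun m hm => Submodule.subset_span hm
  -- absorption lemmas
  have a11 : ∀ z : B, W₁ * (V₁ * z) = z := fun z => by rw [← mul_assoc, r11, one_mul]
  have a22 : ∀ z : B, W₂ * (V₂ * z) = z := fun z => by rw [← mul_assoc, r22, one_mul]
  have a12 : ∀ z : B, W₁ * (V₂ * z) = 0 := fun z => by rw [← mul_assoc, r12, zero_mul]
  have a21 : ∀ z : B, W₂ * (V₁ * z) = 0 := fun z => by rw [← mul_assoc, r21, zero_mul]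
  -- conjugation invariance of M
  have hMconj : ∀ v w : B, w * v = 1 → ∀ m ∈ M, v * m * w ∈ M := by
    intro v w hwv m hm
    induction hm using Submodule.span_induction with
    | mem z hz => exact hVal _ (hconj v w hwv z hz)
    | zero => simpa using M.zero_mem
    | add p q _ _ hp hq =>
        have h : v * (p + q) * w = v * p * w + v * q * w := by noncomm_ring
        rw [h]; exact M.add_mem hp hq
    | smul r p _ hp =>
        have h : v * (r • p) * w = r • (v * p * w) := by
          rw [mul_smul_comm, smul_mul_assoc]
        rw [h]; exact M.smul_mem r hp
  -- square-zero bracket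
  have hbr : ∀ e : B, e * e = 0 → ∀ m ∈ M, e * m - m * e ∈ M := by
    intro e he m hm
    have h1 : (1 + e) * m * (1 - e) ∈ M := by
      apply hMconj _ _ _ m hm
      rw [sub_mul, mul_add, mul_add, one_mul, one_mul, mul_one, he]
      abel
    have h2 : (1 - e) * m * (1 + e) ∈ M := by
      apply hMconj _ _ _ m hm
      rw [add_mul, mul_sub, mul_sub, one_mul, one_mul, mul_one, he]
      abel
    have h3 : (1 + e) * m * (1 - e) - (1 - e) * m * (1 + e) = (2:ℂ) • (e * m - m * e) := by
      have h4 : ((2:ℂ) • (e * m - m * e) : B) = (e * m - m * e) + (e * m - m * e) :=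
        two_smul ℂ _
      rw [h4]; noncomm_ring
    have key : e * m - m * e
        = ((2:ℂ)⁻¹) • ((1 + e) * m * (1 - e) - (1 - e) * m * (1 + e)) := by
      rw [h3, smul_smul]
      norm_num
    rw [key]
    exact M.smul_mem _ (M.sub_mem h1 h2)
  -- t ∈ M, s = V₁ t W₁ ∈ M
  have htM : t ∈ M := hVal t ht
  have hsM : V₁ * t * W₁ ∈ M := hMconj V₁ W₁ r11 t htM
  -- generic square-zero corners
  have sq12 : ∀ a : B, (V₁ * a * W₂) * (V₁ * a * W₂) = 0 := by
    intro a
    simp only [mul_assoc]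
    rw [a21 (a * W₂)]
    simp only [mul_zero]
  have sq21 : ∀ a : B, (V₂ * a * W₁) * (V₂ * a * W₁) = 0 := by
    intro a
    simp only [mul_assoc]
    rw [a12 (a * W₁)]
    simp only [mul_zero]
  -- step m1 : V₂ * (a * t) * W₁ ∈ M
  have m1 : ∀ a : B, V₂ * (a * t) * W₁ ∈ M := by
    intro a
    have h := hbr (V₂ * a * W₁) (sq21 a) (V₁ * t * W₁) hsM
    have hid : (V₂ * a * W₁) * (V₁ * t * W₁) - (V₁ * t * W₁) * (V₂ * a * W₁)
        = V₂ * (a * t) * W₁ := by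
      simp only [mul_assoc, a11, a12, mul_zero, sub_zero]
    rwa [hid] at h
  -- step m2
  have m2 : ∀ a b : B, V₁ * (b * (a * t)) * W₁ - V₂ * ((a * t) * b) * W₂ ∈ M := by
    intro a b
    have h := hbr (V₁ * b * W₂) (sq12 b) (V₂ * (a * t) * W₁) (m1 a)
    have hid : (V₁ * b * W₂) * (V₂ * (a * t) * W₁) - (V₂ * (a * t) * W₁) * (V₁ * b * W₂)
        = V₁ * (b * (a * t)) * W₁ - V₂ * ((a * t) * b) * W₂ := by
      simp only [mul_assoc, a22, a11]
    rwa [hid] at h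
  -- step m3 : V₂ * (a' * (b * (a * t)) + (a*t)*b*a') * W₁ ∈ M
  have m3 : ∀ a b a' : B,
      V₂ * (a' * (b * (a * t)) + ((a * t) * b) * a') * W₁ ∈ M := by
    intro a b a'
    have h := hbr (V₂ * a' * W₁) (sq21 a')
      (V₁ * (b * (a * t)) * W₁ - V₂ * ((a * t) * b) * W₂) (m2 a b)
    have hid : (V₂ * a' * W₁) * (V₁ * (b * (a * t)) * W₁ - V₂ * ((a * t) * b) * W₂)
        - (V₁ * (b * (a * t)) * W₁ - V₂ * ((a * t) * b) * W₂) * (V₂ * a' * W₁)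
        = V₂ * (a' * (b * (a * t)) + ((a * t) * b) * a') * W₁ := by
      simp only [mul_sub, sub_mul, mul_assoc, a11, a12, a21, a22, mul_zero, zero_mul,
        mul_add, add_mul]
      abel
    rwa [hid] at h
  -- lower-left corner fully contained
  have hLL : ∀ z : B, V₂ * z * W₁ ∈ M := by
    intro z
    -- from m3 with a := x, b := y, a' := z : V₂ (z*(y*(x*t)) + x*t*y*z) W₁ ∈ M
    have h1 := m3 x y z
    have h2 := m1 (z * (y * x))
    -- h1 element minus h2 element = c • (V₂ * z * W₁)
    have hid : V₂ * (z * (y * (x * t)) + ((x * t) * y) * z) * W₁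
        - V₂ * ((z * (y * x)) * t) * W₁ = c • (V₂ * z * W₁) := by
      have e1 : z * (y * (x * t)) = (z * (y * x)) * t := by noncomm_ring
      have e2 : ((x * t) * y) * z = c • z := by
        have h0 : (x * t) * y = c • (1:B) := by rw [← hxty]
        rw [h0, smul_mul_assoc, one_mul]
      rw [e1, e2]
      simp only [mul_add, add_mul, mul_smul_comm, smul_mul_assoc]
      abel
    have h3 : c • (V₂ * z * W₁) ∈ M := by
      rw [← hid]; exact M.sub_mem h1 h2
    have := M.smul_mem c⁻¹ h3
    rwa [smul_smul, inv_mul_cancel₀ hc, one_smul] at this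
  -- upper-right: u1 : V₁ * (t * b) * W₂ ∈ M
  have u1 : ∀ b : B, V₁ * (t * b) * W₂ ∈ M := by
    intro b
    have h := hbr (V₁ * b * W₂) (sq12 b) (V₁ * t * W₁) hsM
    have hid : (V₁ * b * W₂) * (V₁ * t * W₁) - (V₁ * t * W₁) * (V₁ * b * W₂)
        = -(V₁ * (t * b) * W₂) := by
      simp only [mul_assoc, a21, a11, mul_zero, zero_sub]
    rw [hid] at h
    have := M.neg_mem h
    rwa [neg_neg] at this
  have u2 : ∀ b b' : B, V₂ * (b' * (t * b)) * W₂ - V₁ * ((t * b) * b') * W₁ ∈ M := by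
    intro b b'
    have h := hbr (V₂ * b' * W₁) (sq21 b') (V₁ * (t * b) * W₂) (u1 b)
    have hid : (V₂ * b' * W₁) * (V₁ * (t * b) * W₂) - (V₁ * (t * b) * W₂) * (V₂ * b' * W₁)
        = V₂ * (b' * (t * b)) * W₂ - V₁ * ((t * b) * b') * W₁ := by
      simp only [mul_assoc, a11, a22]
    rwa [hid] at h
  have u3 : ∀ b b' a : B,
      V₁ * (a * (b' * (t * b)) + ((t * b) * b') * a) * W₂ ∈ M := by
    intro b b' a
    have h := hbr (V₁ * a * W₂) (sq12 a)
      (V₂ * (b' * (t * b)) * W₂ - V₁ * ((t * b) * b') * W₁) (u2 b b')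
    have hid : (V₁ * a * W₂) * (V₂ * (b' * (t * b)) * W₂ - V₁ * ((t * b) * b') * W₁)
        - (V₂ * (b' * (t * b)) * W₂ - V₁ * ((t * b) * b') * W₁) * (V₁ * a * W₂)
        = V₁ * (a * (b' * (t * b)) + ((t * b) * b') * a) * W₂ := by
      simp only [mul_sub, sub_mul, mul_assoc, a11, a12, a21, a22, mul_zero, zero_mul,
        mul_add, add_mul]
      abel
    rwa [hid] at h
  have hUR : ∀ z : B, V₁ * z * W₂ ∈ M := by
    intro z
    have h1 := u3 y x z
    have h2 := u1 (y * (x * z))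
    have hid : V₁ * (z * (x * (t * y)) + ((t * y) * x) * z) * W₂
        - V₁ * (t * (y * (x * z))) * W₂ = c • (V₁ * z * W₂) := by
      have e1 : z * (x * (t * y)) = c • z := by
        have h0 : z * (x * (t * y)) = z * (x * t * y) := by noncomm_ring
        rw [h0, hxty, mul_smul_comm, mul_one]
      have e2 : ((t * y) * x) * z = t * (y * (x * z)) := by noncomm_ring
      rw [e1, e2]
      simp only [mul_add, add_mul, mul_smul_comm, smul_mul_assoc]
      abel
    have h1' := u3 y x z
    -- careful: u3 b b' a with b := y, b' := x, a := z gives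
    -- V₁ * (z * (x * (t * y)) + ((t * y) * x) * z) * W₂ ∈ M
    have h3 : c • (V₁ * z * W₂) ∈ M := by
      rw [← hid]; exact M.sub_mem h1' h2
    have := M.smul_mem c⁻¹ h3
    rwa [smul_smul, inv_mul_cancel₀ hc, one_smul] at this
  -- Hadamard: D(z) = V₁ z W₁ - V₂ z W₂ ∈ M
  have hK : ∀ z : B, (V₁ * W₁ + V₁ * W₂ + V₂ * W₁ - V₂ * W₂) * (V₁ * z * W₂)
      * (V₁ * W₁ + V₁ * W₂ + V₂ * W₁ - V₂ * W₂)
      = V₁ * z * W₁ - V₁ * z * W₂ + V₂ * z * W₁ - V₂ * z * W₂ := by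
    intro z
    simp only [mul_sub, sub_mul, mul_add, add_mul, mul_assoc, a11, a12, a21, a22,
      mul_zero, zero_mul, mul_one, one_mul]
    abel
  have hKK : (V₁ * W₁ + V₁ * W₂ + V₂ * W₁ - V₂ * W₂)
      * (V₁ * W₁ + V₁ * W₂ + V₂ * W₁ - V₂ * W₂) = (2:ℂ) • (1:B) := by
    have h4 : ((2:ℂ) • (1:B) : B) = 1 + 1 := two_smul ℂ _
    rw [h4, ← rcomp]
    simp only [mul_sub, sub_mul, mul_add, add_mul, mul_assoc, a11, a12, a21, a22,
      mul_zero, zero_mul, mul_one, one_mul]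
    abel
  have hD : ∀ z : B, V₁ * z * W₁ - V₂ * z * W₂ ∈ M := by
    intro z
    set u : B := ((Real.sqrt 2 : ℂ))⁻¹ • (V₁ * W₁ + V₁ * W₂ + V₂ * W₁ - V₂ * W₂) with hu
    have hsq : ((Real.sqrt 2 : ℂ))⁻¹ * ((Real.sqrt 2 : ℂ))⁻¹ * 2 = 1 := by
      rw [← mul_inv]
      have : (Real.sqrt 2 : ℂ) * (Real.sqrt 2 : ℂ) = 2 := by
        rw [← Complex.ofReal_mul]
        norm_num [Real.mul_self_sqrt]
      rw [this]
      norm_num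
    have huu : u * u = 1 := by
      rw [hu, smul_mul_smul_comm, hKK, smul_smul, hsq, one_smul]
    have hmem := hMconj u u huu (V₁ * z * W₂) (hUR z)
    have humu : u * (V₁ * z * W₂) * u
        = (((Real.sqrt 2 : ℂ))⁻¹ * ((Real.sqrt 2 : ℂ))⁻¹)
          • (V₁ * z * W₁ - V₁ * z * W₂ + V₂ * z * W₁ - V₂ * z * W₂) := by
      rw [hu, smul_mul_assoc, mul_smul_comm, smul_mul_assoc, smul_smul, hK]
    rw [humu] at hmem
    have h2 : (2:ℂ) • ((((Real.sqrt 2 : ℂ))⁻¹ * ((Real.sqrt 2 : ℂ))⁻¹)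
          • (V₁ * z * W₁ - V₁ * z * W₂ + V₂ * z * W₁ - V₂ * z * W₂)) ∈ M :=
      M.smul_mem _ hmem
    rw [smul_smul] at h2
    have h5 : (2:ℂ) * (((Real.sqrt 2 : ℂ))⁻¹ * ((Real.sqrt 2 : ℂ))⁻¹) = 1 := by
      rw [mul_comm]; exact hsq
    rw [h5, one_smul] at h2
    -- h2 : V₁zW₁ - V₁zW₂ + V₂zW₁ - V₂zW₂ ∈ M ; add corners
    have h6 := M.add_mem h2 (hUR z)
    have h7 := M.sub_mem h6 (hLL z)
    have hid : V₁ * z * W₁ - V₁ * z * W₂ + V₂ * z * W₁ - V₂ * z * W₂ + V₁ * z * W₂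
        - V₂ * z * W₁ = V₁ * z * W₁ - V₂ * z * W₂ := by abel
    rwa [hid] at h7
  -- square-zero split of D
  have sqP : ∀ p : B, ((V₁ + V₂) * p * (W₁ - W₂)) * ((V₁ + V₂) * p * (W₁ - W₂)) = 0 := by
    intro p
    have hmid : (W₁ - W₂) * ((V₁ + V₂) * (p * (W₁ - W₂))) = 0 := by
      simp only [mul_add, add_mul, mul_sub, sub_mul, mul_assoc, a11, a12, a21, a22,
        mul_zero, zero_mul]
      abel
    calc ((V₁ + V₂) * p * (W₁ - W₂)) * ((V₁ + V₂) * p * (W₁ - W₂))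
        = (V₁ + V₂) * p * ((W₁ - W₂) * ((V₁ + V₂) * (p * (W₁ - W₂)))) := by
          simp only [mul_assoc]
      _ = 0 := by rw [hmid, mul_zero]
  have sqQ : ∀ p : B, ((V₁ - V₂) * p * (W₁ + W₂)) * ((V₁ - V₂) * p * (W₁ + W₂)) = 0 := by
    intro p
    have hmid : (W₁ + W₂) * ((V₁ - V₂) * (p * (W₁ + W₂))) = 0 := by
      simp only [mul_add, add_mul, mul_sub, sub_mul, mul_assoc, a11, a12, a21, a22,
        mul_zero, zero_mul]
      abel
    calc ((V₁ - V₂) * p * (W₁ + W₂)) * ((V₁ - V₂) * p * (W₁ + W₂))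
        = (V₁ - V₂) * p * ((W₁ + W₂) * ((V₁ - V₂) * (p * (W₁ + W₂)))) := by
          simp only [mul_assoc]
      _ = 0 := by rw [hmid, mul_zero]
  have hDsplit : ∀ p : B, (2:ℂ) • (V₁ * p * W₁ - V₂ * p * W₂)
      = (V₁ + V₂) * p * (W₁ - W₂) + (V₁ - V₂) * p * (W₁ + W₂) := by
    intro p
    have h4 : ((2:ℂ) • (V₁ * p * W₁ - V₂ * p * W₂) : B)
        = (V₁ * p * W₁ - V₂ * p * W₂) + (V₁ * p * W₁ - V₂ * p * W₂) := two_smul ℂ _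
    rw [h4]
    noncomm_ring
  -- bracket with D(p) lands in M
  have hbrD : ∀ p : B, ∀ m ∈ M,
      (V₁ * p * W₁ - V₂ * p * W₂) * m - m * (V₁ * p * W₁ - V₂ * p * W₂) ∈ M := by
    intro p m hm
    have h1 := hbr _ (sqP p) m hm
    have h2 := hbr _ (sqQ p) m hm
    have h3 := M.add_mem h1 h2
    have h4 : ((V₁ + V₂) * p * (W₁ - W₂)) * m - m * ((V₁ + V₂) * p * (W₁ - W₂))
        + (((V₁ - V₂) * p * (W₁ + W₂)) * m - m * ((V₁ - V₂) * p * (W₁ + W₂)))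
        = ((2:ℂ) • (V₁ * p * W₁ - V₂ * p * W₂)) * m
          - m * ((2:ℂ) • (V₁ * p * W₁ - V₂ * p * W₂)) := by
      rw [hDsplit p]
      noncomm_ring
    rw [h4] at h3
    rw [smul_mul_assoc, mul_smul_comm, ← smul_sub] at h3
    have := M.smul_mem ((2:ℂ)⁻¹) h3
    rwa [smul_smul, inv_mul_cancel₀ (two_ne_zero), one_smul] at this
  -- Σ of a commutator
  have hSigComm : ∀ p q : B,
      V₁ * (p * q - q * p) * W₁ + V₂ * (p * q - q * p) * W₂ ∈ M := by
    intro p q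
    have h := hbrD p (V₁ * q * W₁ - V₂ * q * W₂) (hD q)
    have hid : (V₁ * p * W₁ - V₂ * p * W₂) * (V₁ * q * W₁ - V₂ * q * W₂)
        - (V₁ * q * W₁ - V₂ * q * W₂) * (V₁ * p * W₁ - V₂ * p * W₂)
        = V₁ * (p * q - q * p) * W₁ + V₂ * (p * q - q * p) * W₂ := by
      simp only [mul_sub, sub_mul, mul_add, add_mul, mul_assoc, a11, a12, a21, a22,
        mul_zero, zero_mul]
      abel
    rwa [hid] at h
  -- Σ(z) ∈ M for all z
  have hSig : ∀ z : B, V₁ * z * W₁ + V₂ * z * W₂ ∈ M := by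
    intro z
    obtain ⟨b₁, b₂, b₃, b₄, hz⟩ := hcomm z
    have h1 := hSigComm b₁ b₂
    have h2 := hSigComm b₃ b₄
    have h3 := M.add_mem h1 h2
    have hid : V₁ * (b₁ * b₂ - b₂ * b₁) * W₁ + V₂ * (b₁ * b₂ - b₂ * b₁) * W₂
        + (V₁ * (b₃ * b₄ - b₄ * b₃) * W₁ + V₂ * (b₃ * b₄ - b₄ * b₃) * W₂)
        = V₁ * z * W₁ + V₂ * z * W₂ := by
      rw [hz]
      noncomm_ring
    rwa [hid] at h3
  -- final decomposition
  rw [hM, eq_top_iff]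
  intro T _
  have hdiag : V₁ * (W₁ * T * V₁) * W₁ + V₂ * (W₂ * T * V₂) * W₂ ∈ M := by
    have h1 := hSig (W₁ * T * V₁ + W₂ * T * V₂)
    have h2 := hD (W₁ * T * V₁ - W₂ * T * V₂)
    have h3 := M.add_mem h1 h2
    have hid : V₁ * (W₁ * T * V₁ + W₂ * T * V₂) * W₁ + V₂ * (W₁ * T * V₁ + W₂ * T * V₂) * W₂
        + (V₁ * (W₁ * T * V₁ - W₂ * T * V₂) * W₁ - V₂ * (W₁ * T * V₁ - W₂ * T * V₂) * W₂)
        = (2:ℂ) • (V₁ * (W₁ * T * V₁) * W₁ + V₂ * (W₂ * T * V₂) * W₂) := by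
      have h4 : ((2:ℂ) • (V₁ * (W₁ * T * V₁) * W₁ + V₂ * (W₂ * T * V₂) * W₂) : B)
          = (V₁ * (W₁ * T * V₁) * W₁ + V₂ * (W₂ * T * V₂) * W₂)
            + (V₁ * (W₁ * T * V₁) * W₁ + V₂ * (W₂ * T * V₂) * W₂) := two_smul ℂ _
      rw [h4]
      noncomm_ring
    rw [hid] at h3
    have := M.smul_mem ((2:ℂ)⁻¹) h3
    rwa [smul_smul, inv_mul_cancel₀ (two_ne_zero), one_smul] at this
  have h5 := M.add_mem (M.add_mem hdiag (hUR (W₁ * T * V₂))) (hLL (W₂ * T * V₁))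
  have hid : V₁ * (W₁ * T * V₁) * W₁ + V₂ * (W₂ * T * V₂) * W₂
      + V₁ * (W₁ * T * V₂) * W₂ + V₂ * (W₂ * T * V₁) * W₁ = T := by
    have hT : T = (V₁ * W₁ + V₂ * W₂) * T * (V₁ * W₁ + V₂ * W₂) := by
      rw [rcomp, one_mul, mul_one]
    conv_rhs => rw [hT]
    noncomm_ring
  rwa [hid] at h5

end Chase

/-! ### Regular representation of the free monoid -/

section RegRep

variable {ι : Type*}

abbrev Wm := FreeMonoid ℕ

def lmap (u : Wm) : Wm × ι → Wm × ι := fun p => (u * p.1, p.2)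

lemma lmap_inj (u : Wm) : Function.Injective (lmap (ι := ι) u) := by
  rintro ⟨p1, p2⟩ ⟨q1, q2⟩ h
  simp only [lmap, Prod.ext_iff] at h ⊢
  refine ⟨?_, h.2⟩
  have := congrArg FreeMonoid.toList h.1
  simp only [FreeMonoid.toList_mul] at this
  exact FreeMonoid.toList.injective (List.append_cancel_left this)

lemma Sop_congr {γ δ : Type*} {j j' : γ → δ} (hj : Function.Injective j)
    (h : j = j') : Sop j hj = Sop j' (h ▸ hj) := by
  subst h; rfl

lemma Sop_id {γ : Type*} : Sop (id : γ → γ) Function.injective_id = 1 := by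
  ext f : 1
  apply lp_ext; intro b
  show pushFun id (⇑f) b = f b
  exact pushFun_apply id Function.injective_id (⇑f) b

lemma lift_word_Sop (u : Wm) :
    FreeMonoid.lift (fun i => Sop (lmap (ι := ι) (FreeMonoid.of i)) (lmap_inj _)) u
      = Sop (lmap (ι := ι) u) (lmap_inj u) := by
  induction u using FreeMonoid.inductionOn' with
  | one =>
      rw [map_one]
      have h : lmap (ι := ι) 1 = id := by
        funext p; simp [lmap]
      rw [Sop_congr (lmap_inj 1) h, Sop_id]
  | of_mul i u' ih =>
      rw [map_mul, ih, FreeMonoid.lift_eval_of, ContinuousLinearMap.mul_def,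
        Sop_comp_Sop]
      apply Sop_congr
      funext p
      simp [lmap, mul_assoc]

end RegRep

/-! ### the x t y = c • 1 computation -/

section XTY

variable {ι : Type*} (eα : Wm × ι ≃ ι)

def jc (u : Wm) : Wm × ι → Wm × ι := fun p => (u, eα p)

lemma jc_inj (u : Wm) : Function.Injective (jc eα u) := by
  intro p q h
  simp only [jc, Prod.ext_iff] at h
  exact eα.injective h.2

lemma xword (u w₀ : Wm) :
    (Pop (jc eα w₀) (jc_inj eα w₀)) * (Sop (lmap u) (lmap_inj u)) * (Sop (jc eα 1) (jc_inj eα 1))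
      = if u = w₀ then 1 else 0 := by
  rw [ContinuousLinearMap.mul_def, ContinuousLinearMap.mul_def,
    ContinuousLinearMap.comp_assoc, Sop_comp_Sop]
  have hcomp : (lmap u) ∘ (jc eα 1) = jc eα u := by
    funext p; simp [lmap, jc]
  rw [Sop_congr _ hcomp]
  by_cases h : u = w₀
  · subst h
    rw [if_pos rfl, Pop_comp_Sop, ContinuousLinearMap.one_def]
  · rw [if_neg h]
    apply Pop_comp_Sop_disjoint
    intro p q
    simp only [jc, Prod.ext_iff, ne_eq, not_and]
    intro hw
    exact absurd hw.symm h

lemma xty_eq (g : FreeAlgebra ℂ ℕ) (w₀ : Wm) :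
    (Pop (jc eα w₀) (jc_inj eα w₀))
      * (FreeAlgebra.lift ℂ
          (fun i => Sop (lmap (ι := ι) (FreeMonoid.of i)) (lmap_inj _)) g)
      * (Sop (jc eα 1) (jc_inj eα 1))
      = ((Emo g).coeff w₀) • 1 := by
  rw [lift_eq_sum, Finsupp.sum, Finset.mul_sum, Finset.sum_mul]
  have hterm : ∀ u ∈ (Emo g).coeff.support,
      (Pop (jc eα w₀) (jc_inj eα w₀))
        * ((Emo g).coeff u • FreeMonoid.lift
            (fun i => Sop (lmap (ι := ι) (FreeMonoid.of i)) (lmap_inj _)) u)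
        * (Sop (jc eα 1) (jc_inj eα 1))
      = if u = w₀ then (Emo g).coeff u • 1 else 0 := by
    intro u _
    rw [lift_word_Sop, mul_smul_comm, smul_mul_assoc, xword]
    split
    · rfl
    · rw [smul_zero]
  rw [Finset.sum_congr rfl hterm,
    Finset.sum_ite_eq' (Emo g).coeff.support w₀ (fun u => (Emo g).coeff u • (1 : _))]
  split
  · rfl
  · rename_i hns
    rw [Finsupp.notMem_support_iff.mp hns, zero_smul]

end XTY

/-! ### evaluation at zero -/

section ZeroEval

variable {B : Type*} [Ring B] [Algebra ℂ B]

lemma wordeval_zero (u : Wm) (hu : u ≠ 1) :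
    FreeMonoid.lift (fun _ : ℕ => (0:B)) u = 0 := by
  induction u using FreeMonoid.inductionOn' with
  | one => exact absurd rfl hu
  | of_mul i u' ih => rw [map_mul, FreeMonoid.lift_eval_of, zero_mul]

lemma lift_zero_eq (f : FreeAlgebra ℂ ℕ) :
    FreeAlgebra.lift ℂ (fun _ => (0:B)) f = ((Emo f).coeff 1) • 1 := by
  rw [lift_eq_sum, Finsupp.sum]
  have hterm : ∀ u ∈ (Emo f).coeff.support,
      (Emo f).coeff u • FreeMonoid.lift (fun _ : ℕ => (0:B)) u
        = if u = 1 then (Emo f).coeff u • 1 else 0 := by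
    intro u _
    by_cases h : u = 1
    · subst h
      rw [if_pos rfl, show (FreeMonoid.lift (fun _ : ℕ => (0:B))) 1 = 1 from map_one _]
    · rw [if_neg h, wordeval_zero u h, smul_zero]
  rw [Finset.sum_congr rfl hterm,
    Finset.sum_ite_eq' (Emo f).coeff.support 1 (fun u => (Emo f).coeff u • (1 : B))]
  split
  · rfl
  · rename_i hns
    rw [Finsupp.notMem_support_iff.mp hns, zero_smul]

end ZeroEval

/-! ### transport along a continuous linear equivalence -/

section Transport

variable {E F : Type*} [NormedAddCommGroup E] [NormedSpace ℂ E]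
  [NormedAddCommGroup F] [NormedSpace ℂ F]

noncomputable def conjAlgEquiv (U : E ≃L[ℂ] F) : (E →L[ℂ] E) ≃ₐ[ℂ] (F →L[ℂ] F) :=
  AlgEquiv.ofLinearEquiv (U.arrowCongr U).toLinearEquiv
    (by
      ext v
      simp [ContinuousLinearEquiv.arrowCongr])
    (by
      intro T S
      ext v
      simp [ContinuousLinearEquiv.arrowCongr, ContinuousLinearMap.mul_def])

lemma algEquiv_lift {A₁ A₂ : Type*} [Ring A₁] [Algebra ℂ A₁] [Ring A₂] [Algebra ℂ A₂]
    (Θ : A₁ ≃ₐ[ℂ] A₂) (a : ℕ → A₁) (f : FreeAlgebra ℂ ℕ) :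
    Θ (FreeAlgebra.lift ℂ a f) = FreeAlgebra.lift ℂ (fun i => Θ (a i)) f := by
  have key : Θ.toAlgHom.comp (FreeAlgebra.lift ℂ a)
      = FreeAlgebra.lift ℂ (fun i => Θ (a i)) := by
    apply FreeAlgebra.hom_ext
    funext i
    simp
  calc Θ (FreeAlgebra.lift ℂ a f)
      = (Θ.toAlgHom.comp (FreeAlgebra.lift ℂ a)) f := rfl
    _ = _ := by rw [key]

end Transport

end Stmt4


open Stmt4 in
theorem stmt4 {H : Type*} [NormedAddCommGroup H] [InnerProductSpace ℂ H] [CompleteSpace H]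
    (hinf : ¬ FiniteDimensional ℂ H)
    (f : FreeAlgebra ℂ ℕ) (hf : f ∉ Set.range (algebraMap ℂ (FreeAlgebra ℂ ℕ))) :
    Submodule.span ℂ
      {y : H →L[ℂ] H | ∃ a : ℕ → (H →L[ℂ] H), (FreeAlgebra.lift ℂ a) f = y} = ⊤ := by
  classical
  obtain ⟨wset, b, -⟩ := exists_hilbertBasis ℂ H
  -- the index type is infinite
  have hι : Infinite ↥wset := by
    by_contra hfin
    rw [not_infinite_iff_finite] at hfin
    haveI : Fintype ↥wset := Fintype.ofFinite _
    apply hinf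
    let F : H →ₗ[ℂ] (↥wset → ℂ) :=
      { toFun := fun h i => b.repr h i
        map_add' := fun h1 h2 => by
          funext i
          show (b.repr (h1 + h2)) i = (b.repr h1) i + (b.repr h2) i
          rw [map_add, lp.coeFn_add]
          rfl
        map_smul' := fun c h1 => by
          funext i
          show (b.repr (c • h1)) i = ((RingHom.id ℂ) c • fun j => (b.repr h1) j) i
          rw [map_smul, lp.coeFn_smul]
          rfl }
    have hFinj : Function.Injective F := by
      intro h1 h2 hEq
      apply b.repr.injective
      apply lp_ext
      intro i
      exact congrFun hEq i
    exact FiniteDimensional.of_injective F hFinj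
  -- index gymnastics
  let eWN : Wm ≃ ℕ := FreeMonoid.toList.trans (Denumerable.eqv (List ℕ))
  have hcard : Nonempty ((ℕ × ↥wset) ≃ ↥wset) := by
    apply Cardinal.eq.mp
    simp only [Cardinal.mk_prod, Cardinal.mk_nat, Cardinal.lift_aleph0, Cardinal.lift_id,
      Cardinal.lift_id']
    exact Cardinal.mul_eq_right (Cardinal.infinite_iff.mp hι)
      (Cardinal.infinite_iff.mp hι) Cardinal.aleph0_ne_zero
  obtain ⟨E0⟩ := hcard
  let eAN : (Wm × ↥wset) ≃ (ℕ × ↥wset) := Equiv.prodCongr eWN (Equiv.refl _)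
  let eα : (Wm × ↥wset) ≃ ↥wset := eAN.trans E0
  let E2 : ((Wm × ↥wset) ⊕ (Wm × ↥wset)) ≃ (Wm × ↥wset) :=
    ((Equiv.sumCongr eAN eAN).trans
      ((Equiv.sumProdDistrib ℕ ℕ ↥wset).symm.trans
        (Equiv.prodCongr (Denumerable.eqv (ℕ ⊕ ℕ)) (Equiv.refl _)))).trans eAN.symm
  let eN : (ℕ × (Wm × ↥wset)) ≃ (Wm × ↥wset) :=
    ((Equiv.prodCongr (Equiv.refl ℕ) eAN).trans
      ((Equiv.prodAssoc ℕ ℕ ↥wset).symm.trans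
        (Equiv.prodCongr (Denumerable.eqv (ℕ × ℕ)) (Equiv.refl _)))).trans eAN.symm
  -- the polynomial with zero constant term
  set c₀ : ℂ := (Emo f).coeff 1 with hc₀
  set g : FreeAlgebra ℂ ℕ := f - algebraMap ℂ _ c₀ with hg
  have halg : (algebraMap ℂ (MonoidAlgebra ℂ Wm)) c₀ = MonoidAlgebra.single 1 c₀ := by
    have := congrFun (MonoidAlgebra.coe_algebraMap (R := ℂ) (A := ℂ) (M := Wm)) c₀
    simpa using this
  have hEg : Emo g = Emo f - MonoidAlgebra.single 1 c₀ := by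
    rw [hg, map_sub]
    congr 1
    rw [AlgEquiv.commutes, halg]
  have hg1 : (Emo g).coeff 1 = 0 := by
    rw [hEg, MonoidAlgebra.coeff_sub, MonoidAlgebra.coeff_single, Finsupp.sub_apply, Finsupp.single_eq_same, hc₀, sub_self]
  have hgne : g ≠ 0 := by
    intro h0
    rw [hg, sub_eq_zero] at h0
    exact hf ⟨c₀, h0.symm⟩
  have hEgne : Emo g ≠ 0 := by
    intro h
    apply hgne
    have := congrArg Emo.symm h
    simpa using this
  obtain ⟨w₀, hw₀⟩ := Finsupp.support_nonempty_iff.mpr (fun h => hEgne (MonoidAlgebra.coeff_eq_zero.mp h))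
  have hcw : (Emo g).coeff w₀ ≠ 0 := Finsupp.mem_support_iff.mp hw₀
  -- operators
  let j₁ : (Wm × ↥wset) → (Wm × ↥wset) := E2 ∘ Sum.inl
  let j₂ : (Wm × ↥wset) → (Wm × ↥wset) := E2 ∘ Sum.inr
  have hj₁ : Function.Injective j₁ := E2.injective.comp Sum.inl_injective
  have hj₂ : Function.Injective j₂ := E2.injective.comp Sum.inr_injective
  have hd : ∀ a b, j₁ a ≠ j₂ b := by
    intro a b h
    exact absurd (E2.injective h) (by simp)
  let V₁ := Sop j₁ hj₁
  let W₁ := Pop j₁ hj₁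
  let V₂ := Sop j₂ hj₂
  let W₂ := Pop j₂ hj₂
  have r11 : W₁ * V₁ = 1 := by
    rw [ContinuousLinearMap.mul_def]
    exact (Pop_comp_Sop _ _).trans (ContinuousLinearMap.one_def).symm
  have r22 : W₂ * V₂ = 1 := by
    rw [ContinuousLinearMap.mul_def]
    exact (Pop_comp_Sop _ _).trans (ContinuousLinearMap.one_def).symm
  have r12 : W₁ * V₂ = 0 := by
    rw [ContinuousLinearMap.mul_def]
    exact Pop_comp_Sop_disjoint hj₁ hj₂ hd
  have r21 : W₂ * V₁ = 0 := by
    rw [ContinuousLinearMap.mul_def]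
    exact Pop_comp_Sop_disjoint hj₂ hj₁ (fun a b h => hd b a h.symm)
  have rcomp : V₁ * W₁ + V₂ * W₂ = 1 := by
    rw [ContinuousLinearMap.mul_def, ContinuousLinearMap.mul_def]
    rw [Sop_Pop_add_Sop_Pop hj₁ hj₂ hd (fun p => ?_), ContinuousLinearMap.one_def]
    rcases hs : E2.symm p with u | u
    · exact Or.inl ⟨u, by simp [j₁, ← hs]⟩
    · exact Or.inr ⟨u, by simp [j₂, ← hs]⟩
  -- the special value and the compressions
  let Lfun : ℕ → (L2 (Wm × ↥wset) →L[ℂ] L2 (Wm × ↥wset)) :=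
    fun i => Sop (lmap (FreeMonoid.of i)) (lmap_inj _)
  let t := FreeAlgebra.lift ℂ Lfun g
  let x := Pop (jc eα w₀) (jc_inj eα w₀)
  let y := Sop (jc eα 1) (jc_inj eα 1)
  have hxty : x * t * y = ((Emo g).coeff w₀) • 1 := xty_eq eα g w₀
  -- value set of g
  set ValG : Set (L2 (Wm × ↥wset) →L[ℂ] L2 (Wm × ↥wset)) :=
    {z | ∃ a, FreeAlgebra.lift ℂ a g = z} with hValG
  have hconj : ∀ v w, w * v = 1 → ∀ m ∈ ValG, v * m * w ∈ ValG := by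
    rintro v w hwv m ⟨a, rfl⟩
    exact ⟨fun i => v * a i * w, (conj_lift v w hwv a g hg1).symm⟩
  have hspan_g : Submodule.span ℂ ValG = ⊤ :=
    span_eq_top_abstract ValG hconj V₁ W₁ V₂ W₂ r11 r22 r12 r21 rcomp
      t x y ⟨Lfun, rfl⟩ _ hcw hxty (fun z => exists_two_commutators eN z)
  -- span of f-values on the model space
  have hspan_fA : Submodule.span ℂ
      {z : L2 (Wm × ↥wset) →L[ℂ] L2 (Wm × ↥wset) | ∃ a, FreeAlgebra.lift ℂ a f = z} = ⊤ := by
    rw [eq_top_iff, ← hspan_g]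
    apply Submodule.span_le.mpr
    rintro z ⟨a, rfl⟩
    have h1 : FreeAlgebra.lift ℂ a g
        = FreeAlgebra.lift ℂ a f - FreeAlgebra.lift ℂ (fun _ => 0) f := by
      rw [hg, map_sub, lift_zero_eq]
      congr 1
      rw [AlgHom.commutes, Algebra.algebraMap_eq_smul_one, hc₀]
    rw [h1]
    exact Submodule.sub_mem _ (Submodule.subset_span ⟨a, rfl⟩)
      (Submodule.subset_span ⟨fun _ => 0, rfl⟩)
  -- transport to H
  let R : L2 (↥wset) ≃L[ℂ] L2 (Wm × ↥wset) :=
    ContinuousLinearEquiv.equivOfInverse (Sop ⇑eα.symm eα.symm.injective)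
      (Sop ⇑eα eα.injective)
      (by
        intro z
        have h1 : (Sop ⇑eα eα.injective).comp (Sop ⇑eα.symm eα.symm.injective)
            = Sop (⇑eα ∘ ⇑eα.symm) (eα.injective.comp eα.symm.injective) :=
          Sop_comp_Sop _ _ _ _
        have h2 : Sop (⇑eα ∘ ⇑eα.symm) (eα.injective.comp eα.symm.injective) = 1 := by
          rw [Sop_congr _ (by funext i; simp : (⇑eα ∘ ⇑eα.symm) = id), Sop_id]
        have := congrArg (fun (T : L2 (↥wset) →L[ℂ] L2 (↥wset)) => T z) (h1.trans h2)
        simpa using this)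
      (by
        intro z
        have h1 : (Sop ⇑eα.symm eα.symm.injective).comp (Sop ⇑eα eα.injective)
            = Sop (⇑eα.symm ∘ ⇑eα) (eα.symm.injective.comp eα.injective) :=
          Sop_comp_Sop _ _ _ _
        have h2 : Sop (⇑eα.symm ∘ ⇑eα) (eα.symm.injective.comp eα.injective) = 1 := by
          rw [Sop_congr _ (by funext i; simp : (⇑eα.symm ∘ ⇑eα) = id), Sop_id]
        have := congrArg (fun (T : L2 (Wm × ↥wset) →L[ℂ] L2 (Wm × ↥wset)) => T z) (h1.trans h2)
        simpa using this)
  let U : H ≃L[ℂ] L2 (Wm × ↥wset) := b.repr.toContinuousLinearEquiv.trans R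
  let Θ : (H →L[ℂ] H) ≃ₐ[ℂ] (L2 (Wm × ↥wset) →L[ℂ] L2 (Wm × ↥wset)) := conjAlgEquiv U
  have himg : {z : L2 (Wm × ↥wset) →L[ℂ] L2 (Wm × ↥wset) | ∃ a, FreeAlgebra.lift ℂ a f = z}
      = ⇑Θ '' {y : H →L[ℂ] H | ∃ a, FreeAlgebra.lift ℂ a f = y} := by
    ext z
    constructor
    · rintro ⟨a, rfl⟩
      refine ⟨FreeAlgebra.lift ℂ (fun i => Θ.symm (a i)) f, ⟨_, rfl⟩, ?_⟩
      rw [algEquiv_lift]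
      simp only [AlgEquiv.apply_symm_apply]
    · rintro ⟨z', ⟨a, rfl⟩, rfl⟩
      exact ⟨fun i => Θ (a i), (algEquiv_lift Θ a f).symm⟩
  rw [himg] at hspan_fA
  have himg2 : ⇑Θ '' {y : H →L[ℂ] H | ∃ a, FreeAlgebra.lift ℂ a f = y}
      = ⇑Θ.toLinearMap '' {y : H →L[ℂ] H | ∃ a, FreeAlgebra.lift ℂ a f = y} := rfl
  rw [himg2, Submodule.span_image] at hspan_fA
  have hmapinj : Function.Injective (Submodule.map Θ.toLinearMap) :=
    Submodule.map_injective_of_injective Θ.injective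
  apply hmapinj
  rw [hspan_fA, Submodule.map_top]
  exact (LinearMap.range_eq_top.mpr Θ.surjective).symm
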